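/- For every rational number p/q in lowest terms with q ≥ 1, there exists a unique periodic orbit of the doubling map x ↦ 2x mod 1 on the circle ℝ/ℤ whose points are arranged in the same cyclic order as an orbit of the rigid rotation by p/q; this orbit has period exactly q. -/

import Mathlib

noncomputable section

/-- The doubling map on the circle ℝ/ℤ. -/
def dbl (x : AddCircle (1:ℝ)) : AddCircle (1:ℝ) := x + x

/-- `O` is a periodic Sturmian orbit of the doubling map with combinatorial rotation
number `p/q`: there is a `q`-periodic enumeration of `O`, injective over one period,
arranged in cyclic order, on which the doubling map acts as the rotation `j ↦ j + p`. -/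
def IsSturmianOrbit (p q : ℕ) (O : Set (AddCircle (1:ℝ))) : Prop :=
  ∃ e : ℕ → AddCircle (1:ℝ),
    (∀ n, e (n + q) = e n) ∧
    Set.InjOn e (Set.Iio q) ∧
    O = Set.range e ∧
    (∀ i j k : ℕ, i < j → j < k → k < q → sbtw (e i) (e j) (e k)) ∧
    (∀ n, dbl (e n) = e (n + p))

namespace SturmianAux

open Finset

/-! ### Circle lemmas -/

lemma sbtw_of_lifts {x y z : ℝ} (h0 : 0 ≤ x) (hxy : x < y) (hyz : y < z) (hz1 : z < 1) :
    sbtw (x : AddCircle (1:ℝ)) (y : AddCircle (1:ℝ)) (z : AddCircle (1:ℝ)) := by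
  have h1 : (0:ℝ) < 1 := one_pos
  rw [sbtw_iff_btw_not_btw]
  constructor
  · rw [show ((x:AddCircle (1:ℝ))) = (QuotientAddGroup.mk x) from rfl]
    rw [QuotientAddGroup.btw_coe_iff]
    rw [(toIcoMod_eq_self h1).2 ⟨hxy.le, by linarith⟩,
        (toIocMod_eq_self h1).2 ⟨lt_trans hxy hyz, by linarith⟩]
    exact hyz.le
  · rw [show ((z:AddCircle (1:ℝ))) = (QuotientAddGroup.mk z) from rfl]
    rw [QuotientAddGroup.btw_coe_iff]
    have e1 : toIcoMod h1 z y = y + 1 :=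
      (toIcoMod_eq_iff h1).2 ⟨⟨by linarith, by linarith⟩,
        ⟨-1, by rw [neg_one_zsmul]; ring⟩⟩
    have e2 : toIocMod h1 z x = x + 1 :=
      (toIocMod_eq_iff h1).2 ⟨⟨by linarith, by linarith⟩,
        ⟨-1, by rw [neg_one_zsmul]; ring⟩⟩
    rw [e1, e2]
    push_neg
    linarith

lemma le_of_btw_lifts {x y z : ℝ} (h0 : 0 ≤ x) (hxy : x < y) (hy1 : y < 1) (hxz : x < z)
    (hz1 : z < 1)
    (h : Btw.btw (x : AddCircle (1:ℝ)) (y : AddCircle (1:ℝ)) (z : AddCircle (1:ℝ))) : y ≤ z := by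
  have h1 : (0:ℝ) < 1 := one_pos
  rw [show ((x:AddCircle (1:ℝ))) = (QuotientAddGroup.mk x) from rfl] at h
  rw [QuotientAddGroup.btw_coe_iff] at h
  rwa [(toIcoMod_eq_self h1).2 ⟨hxy.le, by linarith⟩,
      (toIocMod_eq_self h1).2 ⟨hxz, by linarith⟩] at h

lemma coe_nat_add (x : ℝ) (m : ℕ) : ((x + m : ℝ) : AddCircle (1:ℝ)) = (x : AddCircle (1:ℝ)) := by
  induction m with
  | zero => norm_num
  | succ m ih =>
    push_cast
    rw [show x + ((m : ℝ) + 1) = (x + m) + 1 by ring]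
    rw [AddCircle.coe_add_period (1:ℝ) (x + m)]
    push_cast at ih
    exact ih

/-- canonical representative in `[0,1)` -/
def uval (x : AddCircle (1:ℝ)) : ℝ := ((AddCircle.equivIco 1 0 x : Set.Ico (0:ℝ) (0 + 1)) : ℝ)

lemma uval_mem (x : AddCircle (1:ℝ)) : uval x ∈ Set.Ico (0:ℝ) 1 := by
  have h := (AddCircle.equivIco 1 0 x).2
  exact ⟨h.1, lt_of_lt_of_eq h.2 (zero_add 1)⟩

lemma coe_uval (x : AddCircle (1:ℝ)) : ((uval x : ℝ) : AddCircle (1:ℝ)) = x := by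
  change ((AddCircle.equivIco 1 0).symm (AddCircle.equivIco 1 0 x)) = x
  exact (AddCircle.equivIco 1 0).symm_apply_apply x

/-! ### The digit sequence and numerators -/

def dig (p q n : ℕ) : ℕ := if q - p % q ≤ n % q then 1 else 0

lemma dig_le_one (p q n : ℕ) : dig p q n ≤ 1 := by
  unfold dig; split <;> simp

lemma dig_eq_of_mod_eq {p q n m : ℕ} (h : n % q = m % q) : dig p q n = dig p q m := by
  unfold dig; rw [h]

def Anum (p q n : ℕ) : ℕ := ∑ k ∈ range q, dig p q (n + k * p) * 2 ^ (q - 1 - k)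

lemma Anum_eq_of_mod_eq {p q n m : ℕ} (h : n % q = m % q) : Anum p q n = Anum p q m :=
  Finset.sum_congr rfl fun k _ => by rw [dig_eq_of_mod_eq (Nat.ModEq.add_right _ h)]

lemma two_pow_sum (n : ℕ) : ∑ i ∈ range n, 2 ^ i = 2 ^ n - 1 := by
  induction n with
  | zero => simp
  | succ n ih =>
    rw [Finset.sum_range_succ, ih, pow_succ]
    have : 1 ≤ 2 ^ n := Nat.one_le_two_pow
    omega

lemma sum_w (q : ℕ) : ∑ k ∈ range q, 2 ^ (q - 1 - k) = 2 ^ q - 1 := by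
  rw [Finset.sum_range_reflect (fun j => 2 ^ j) q]
  exact two_pow_sum q

lemma res_inj {p q m : ℕ} (hpq : Nat.Coprime p q) {k k' : ℕ} (hk : k < q) (hk' : k' < q)
    (h : (m + k * p) % q = (m + k' * p) % q) : k = k' := by
  have h1 : k * p ≡ k' * p [MOD q] := by
    have := Nat.ModEq.add_left_cancel' m h
    exact this
  have h2 : k ≡ k' [MOD q] :=
    Nat.ModEq.cancel_right_of_coprime (by rwa [Nat.coprime_comm] at hpq) h1
  exact h2.eq_of_lt_of_lt hk hk'

lemma res_exists {p q m : ℕ} (hq : 0 < q) (hpq : Nat.Coprime p q) {a : ℕ} (ha : a < q) :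
    ∃ k, k < q ∧ (m + k * p) % q = a := by
  have hinj : Function.Injective
      (fun k : Fin q => (⟨(m + k * p) % q, Nat.mod_lt _ hq⟩ : Fin q)) := by
    intro k k' h
    exact Fin.ext (res_inj hpq k.2 k'.2 (by simpa using congrArg Fin.val h))
  obtain ⟨k, hk⟩ := Finite.surjective_of_injective hinj ⟨a, ha⟩
  exact ⟨k, k.2, by simpa using congrArg Fin.val hk⟩

lemma Anum_lt {p q n : ℕ} (hq : 0 < q) (hpq : Nat.Coprime p q) : Anum p q n < 2 ^ q - 1 := by
  obtain ⟨k0, hk0q, hk0⟩ := res_exists (m := n) hq hpq hq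
  have hdig0 : dig p q (n + k0 * p) = 0 := by
    have hpr : p % q < q := Nat.mod_lt _ hq
    unfold dig
    rw [hk0, if_neg (by omega)]
  have : Anum p q n < ∑ k ∈ range q, 2 ^ (q - 1 - k) := by
    apply Finset.sum_lt_sum
    · intro i _
      calc dig p q (n + i * p) * 2 ^ (q - 1 - i) ≤ 1 * 2 ^ (q - 1 - i) :=
            Nat.mul_le_mul_right _ (dig_le_one p q _)
        _ = 2 ^ (q - 1 - i) := one_mul _
    · exact ⟨k0, Finset.mem_range.2 hk0q,
        by rw [hdig0, zero_mul]; exact pow_pos (by norm_num) _⟩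
  rwa [sum_w] at this

lemma Anum_double {p q n : ℕ} (hq : 0 < q) :
    Anum p q (n + p) + dig p q n * 2 ^ q = 2 * Anum p q n + dig p q n := by
  set f : ℕ → ℕ := fun j => dig p q (n + j * p) * 2 ^ (q - j) with hf
  have h1 : ∑ j ∈ range (q + 1), f j = ∑ j ∈ range q, f (j + 1) + f 0 :=
    Finset.sum_range_succ' f q
  have h2 : ∑ j ∈ range (q + 1), f j = ∑ j ∈ range q, f j + f q :=
    Finset.sum_range_succ f q
  have h3 : ∑ j ∈ range q, f (j + 1) = Anum p q (n + p) := by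
    refine Finset.sum_congr rfl fun j _ => ?_
    simp only [hf]
    have e1 : n + (j + 1) * p = n + p + j * p := by ring
    have e2 : q - (j + 1) = q - 1 - j := by omega
    rw [e1, e2]
  have h4 : ∑ j ∈ range q, f j = 2 * Anum p q n := by
    unfold Anum
    rw [Finset.mul_sum]
    refine Finset.sum_congr rfl fun j hj => ?_
    simp only [hf]
    have hjq : j < q := Finset.mem_range.1 hj
    have : q - j = (q - 1 - j) + 1 := by omega
    rw [this, pow_succ]
    ring
  have h5 : f 0 = dig p q n * 2 ^ q := by simp [hf]
  have h6 : f q = dig p q n := by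
    simp only [hf, Nat.sub_self, pow_zero, mul_one]
    exact dig_eq_of_mod_eq (by rw [Nat.add_mul_mod_self_left])
  rw [← h3, ← h5, ← h1, h2, h4, h6]

lemma Anum_succ_lt {p q m : ℕ} (hpq : Nat.Coprime p q) (hm : m + 1 < q) :
    Anum p q m < Anum p q (m + 1) := by
  have hq : 0 < q := by omega
  have hq2 : 2 ≤ q := by omega
  set r := p % q with hr
  have hrq : r < q := Nat.mod_lt _ hq
  have hr0 : 0 < r := by
    rcases Nat.eq_zero_or_pos r with h | h
    · exfalso
      have hd : q ∣ p := Nat.dvd_of_mod_eq_zero h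
      have h1 : q ∣ 1 := hpq ▸ Nat.dvd_gcd hd dvd_rfl
      have := Nat.le_of_dvd one_pos h1
      omega
    · exact h
  obtain ⟨k₁, hk₁q, hk₁⟩ := res_exists (m := m) hq hpq (show q - r - 1 < q by omega)
  have hres_step : ∀ k, (m + (k + 1) * p) % q = ((m + k * p) % q + r) % q := by
    intro k
    have : m + (k + 1) * p = (m + k * p) + p := by ring
    rw [this, Nat.add_mod, ← hr]
  have hk₁1 : k₁ + 1 < q := by
    by_contra hcon
    have hk₁e : k₁ + 1 = q := by omega
    have h1 : (m + (k₁ + 1) * p) % q = q - 1 := by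
      rw [hres_step, hk₁]
      have e : q - r - 1 + r = q - 1 := by omega
      rw [e, Nat.mod_eq_of_lt (by omega)]
    rw [hk₁e] at h1
    have h2 : (m + q * p) % q = m := by
      rw [Nat.add_mul_mod_self_left, Nat.mod_eq_of_lt (by omega)]
    omega
  have hres1 : (m + (k₁ + 1) * p) % q = q - 1 := by
    rw [hres_step, hk₁]
    have e : q - r - 1 + r = q - 1 := by omega
    rw [e, Nat.mod_eq_of_lt (by omega)]
  have hone : 1 % q = 1 := Nat.mod_eq_of_lt (by omega)
  have hstep1 : ∀ k, (m + 1 + k * p) % q = ((m + k * p) % q + 1) % q := by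
    intro k
    have e : m + 1 + k * p = (m + k * p) + 1 := by ring
    rw [e, Nat.add_mod, hone]
  have hdig_m_k₁ : dig p q (m + k₁ * p) = 0 := by
    unfold dig
    rw [← hr, hk₁, if_neg (by omega)]
  have hdig_m1_k₁ : dig p q (m + 1 + k₁ * p) = 1 := by
    unfold dig
    rw [← hr, hstep1, hk₁]
    have e : q - r - 1 + 1 = q - r := by omega
    rw [e, Nat.mod_eq_of_lt (by omega), if_pos (le_refl _)]
  have hdig_eq : ∀ k, k < q → k ≠ k₁ → k ≠ k₁ + 1 →
      dig p q (m + 1 + k * p) = dig p q (m + k * p) := by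
    intro k hkq hne1 hne2
    have ha : (m + k * p) % q < q := Nat.mod_lt _ hq
    have hne_a1 : (m + k * p) % q ≠ q - r - 1 := fun h =>
      hne1 (res_inj hpq hkq hk₁q (h.trans hk₁.symm))
    have hne_a2 : (m + k * p) % q ≠ q - 1 := fun h =>
      hne2 (res_inj hpq hkq hk₁1 (h.trans hres1.symm))
    unfold dig
    rw [← hr, hstep1]
    have h1 : ((m + k * p) % q + 1) % q = (m + k * p) % q + 1 :=
      Nat.mod_eq_of_lt (by omega)
    rw [h1]
    have hiff : (q - r ≤ (m + k * p) % q + 1) ↔ (q - r ≤ (m + k * p) % q) := by omega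
    simp only [hiff]
  set w : ℕ → ℕ := fun k => 2 ^ (q - 1 - k) with hw
  have geo : ∑ k ∈ Finset.Ico (k₁ + 1) q, w k = 2 ^ (q - 1 - k₁) - 1 := by
    rw [Finset.sum_Ico_eq_sum_range]
    have hN : q - (k₁ + 1) = q - 1 - k₁ := by omega
    rw [hN]
    calc ∑ i ∈ range (q - 1 - k₁), w (k₁ + 1 + i)
        = ∑ i ∈ range (q - 1 - k₁), 2 ^ ((q - 1 - k₁) - 1 - i) := by
          refine Finset.sum_congr rfl fun i hi => ?_
          have hi' : i < q - 1 - k₁ := Finset.mem_range.1 hi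
          simp only [hw]
          congr 1
          omega
      _ = ∑ i ∈ range (q - 1 - k₁), 2 ^ i := Finset.sum_range_reflect (fun j => 2 ^ j) _
      _ = 2 ^ (q - 1 - k₁) - 1 := two_pow_sum _
  have split : ∀ g : ℕ → ℕ, ∑ k ∈ range q, g k =
      ∑ k ∈ range k₁, g k + g k₁ + ∑ k ∈ Finset.Ico (k₁ + 1) q, g k := by
    intro g
    rw [Finset.range_eq_Ico,
      ← Finset.sum_Ico_consecutive g (Nat.zero_le k₁) (le_of_lt hk₁q),
      Finset.sum_eq_sum_Ico_succ_bot hk₁q g, ← Finset.range_eq_Ico]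
    ring
  have hS1 : ∑ k ∈ range k₁, dig p q (m + 1 + k * p) * w k
      = ∑ k ∈ range k₁, dig p q (m + k * p) * w k := by
    refine Finset.sum_congr rfl fun k hk => ?_
    have hkk : k < k₁ := Finset.mem_range.1 hk
    rw [hdig_eq k (by omega) (by omega) (by omega)]
  have hT : ∑ k ∈ Finset.Ico (k₁ + 1) q, dig p q (m + k * p) * w k
      ≤ 2 ^ (q - 1 - k₁) - 1 := by
    rw [← geo]
    refine Finset.sum_le_sum fun k _ => ?_
    calc dig p q (m + k * p) * w k ≤ 1 * w k :=
          Nat.mul_le_mul_right _ (dig_le_one p q _)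
      _ = w k := one_mul _
  have hAm := split (fun k => dig p q (m + k * p) * w k)
  have hAm1 := split (fun k => dig p q (m + 1 + k * p) * w k)
  have hp1 : 1 ≤ 2 ^ (q - 1 - k₁) := Nat.one_le_two_pow
  have hwk₁ : w k₁ = 2 ^ (q - 1 - k₁) := rfl
  have hAmv : Anum p q m = ∑ k ∈ range k₁, dig p q (m + k * p) * w k +
      ∑ k ∈ Finset.Ico (k₁ + 1) q, dig p q (m + k * p) * w k := by
    unfold Anum
    rw [hAm]
    simp only [hdig_m_k₁, zero_mul]
    omega
  have hAm1v : Anum p q (m + 1) ≥ ∑ k ∈ range k₁, dig p q (m + k * p) * w k +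
      2 ^ (q - 1 - k₁) := by
    unfold Anum
    rw [hAm1, hS1]
    simp only [hdig_m1_k₁, one_mul, hwk₁]
    omega
  omega

lemma Anum_lt_of_lt {p q : ℕ} (hpq : Nat.Coprime p q) {i j : ℕ} (hij : i < j) (hj : j < q) :
    Anum p q i < Anum p q j := by
  induction j with
  | zero => omega
  | succ j ih =>
    rcases Nat.lt_or_ge i j with h | h
    · exact lt_trans (ih h (by omega)) (Anum_succ_lt hpq hj)
    · have : i = j := by omega
      subst this
      exact Anum_succ_lt hpq hj

/-! ### The canonical orbit -/

def tval (p q n : ℕ) : ℝ := (Anum p q n : ℝ) / (2 ^ q - 1)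

def pt (p q n : ℕ) : AddCircle (1:ℝ) := ((tval p q n : ℝ) : AddCircle (1:ℝ))

lemma hD {q : ℕ} (hq : 0 < q) : (0:ℝ) < 2 ^ q - 1 := by
  have h2 : (2:ℝ) ^ 1 ≤ 2 ^ q := pow_le_pow_right₀ (by norm_num) hq
  norm_num at h2 ⊢
  linarith

lemma tval_nonneg {p q : ℕ} (hq : 0 < q) (n : ℕ) : 0 ≤ tval p q n := by
  have := hD (q := q) hq
  unfold tval
  positivity

lemma tval_lt_one {p q : ℕ} (hq : 0 < q) (hpq : Nat.Coprime p q) (n : ℕ) : tval p q n < 1 := by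
  have hDq := hD (q := q) hq
  have h := Anum_lt (n := n) hq hpq
  have h' : (Anum p q n : ℝ) < 2 ^ q - 1 := by
    have h2 : (1:ℕ) ≤ 2 ^ q := Nat.one_le_two_pow
    have := (Nat.cast_lt (α := ℝ)).2 h
    push_cast [h2] at this
    convert this using 1
  rw [tval, div_lt_one hDq]
  exact h'

lemma tval_lt_of_lt {p q : ℕ} (hq : 0 < q) (hpq : Nat.Coprime p q) {i j : ℕ}
    (hij : i < j) (hj : j < q) : tval p q i < tval p q j := by
  have hDq := hD (q := q) hq
  have h : (Anum p q i : ℝ) < (Anum p q j : ℝ) := by exact_mod_cast Anum_lt_of_lt hpq hij hj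
  exact div_lt_div_of_pos_right h hDq

lemma pt_mod {p q : ℕ} (n : ℕ) : pt p q n = pt p q (n % q) := by
  unfold pt tval
  rw [Anum_eq_of_mod_eq (Nat.mod_mod_of_dvd n dvd_rfl).symm]

lemma pt_periodic {p q : ℕ} (n : ℕ) : pt p q (n + q) = pt p q n := by
  unfold pt tval
  rw [Anum_eq_of_mod_eq (Nat.add_mod_right n q)]

lemma pt_double {p q : ℕ} (hq : 0 < q) (n : ℕ) : dbl (pt p q n) = pt p q (n + p) := by
  have hDq := hD (q := q) hq
  have key : (Anum p q (n + p) : ℝ) + dig p q n * 2 ^ q = 2 * Anum p q n + dig p q n := by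
    exact_mod_cast congrArg (Nat.cast : ℕ → ℝ) (Anum_double (n := n) hq)
  have key2 : tval p q n + tval p q n = tval p q (n + p) + (dig p q n : ℝ) := by
    unfold tval
    field_simp
    linarith
  unfold dbl pt
  rw [← AddCircle.coe_add, key2, coe_nat_add]

/-! ### Helpers for periodic enumerations -/

lemma per_mod {X : Type*} {q : ℕ} (hq : 0 < q) (e : ℕ → X) (hper : ∀ n, e (n + q) = e n) :
    ∀ n, e n = e (n % q) := by
  intro n
  induction n using Nat.strong_induction_on with
  | _ n ih =>
    rcases Nat.lt_or_ge n q with h | h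
    · rw [Nat.mod_eq_of_lt h]
    · have h3 : n - q + q = n := by omega
      calc e n = e (n - q + q) := by rw [h3]
        _ = e (n - q) := hper _
        _ = e ((n - q) % q) := ih (n - q) (by omega)
        _ = e (n % q) := by rw [Nat.mod_eq_sub_mod h]

lemma per_mul {X : Type*} {q : ℕ} (e : ℕ → X) (hper : ∀ n, e (n + q) = e n) :
    ∀ k x, e (x + q * k) = e x := by
  intro k
  induction k with
  | zero => simp
  | succ k ih =>
    intro x
    have : x + q * (k + 1) = (x + q * k) + q := by ring
    rw [this, hper, ih]

lemma coe_inj_Ico {x y : ℝ} (hx : x ∈ Set.Ico (0:ℝ) 1) (hy : y ∈ Set.Ico (0:ℝ) 1)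
    (h : ((x:ℝ) : AddCircle (1:ℝ)) = ((y:ℝ) : AddCircle (1:ℝ))) : x = y := by
  have hx' : x ∈ Set.Ico (0:ℝ) (0 + 1) := by rwa [zero_add]
  have hy' : y ∈ Set.Ico (0:ℝ) (0 + 1) := by rwa [zero_add]
  exact (AddCircle.coe_eq_coe_iff_of_mem_Ico hx' hy').1 h

end SturmianAux

open SturmianAux Finset

lemma sturmian_exists {p q : ℕ} (hq : 1 ≤ q) (hpq : Nat.Coprime p q) :
    IsSturmianOrbit p q (Set.range (pt p q)) := by
  have hq0 : 0 < q := hq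
  refine ⟨pt p q, pt_periodic, ?_, rfl, ?_, fun n => pt_double hq0 n⟩
  · intro i hi j hj hij
    simp only [Set.mem_Iio] at hi hj
    have htv : tval p q i = tval p q j := by
      refine coe_inj_Ico ⟨tval_nonneg hq0 i, tval_lt_one hq0 hpq i⟩
        ⟨tval_nonneg hq0 j, tval_lt_one hq0 hpq j⟩ hij
    rcases Nat.lt_trichotomy i j with h | h | h
    · exact absurd htv (ne_of_lt (tval_lt_of_lt hq0 hpq h hj))
    · exact h
    · exact absurd htv.symm (ne_of_lt (tval_lt_of_lt hq0 hpq h hi))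
  · intro i j k hij hjk hkq
    exact sbtw_of_lifts (tval_nonneg hq0 i)
      (tval_lt_of_lt hq0 hpq hij (lt_trans hjk hkq))
      (tval_lt_of_lt hq0 hpq hjk hkq)
      (tval_lt_one hq0 hpq k)

lemma min_witness {p q : ℕ} (hq : 1 ≤ q) {O : Set (AddCircle (1:ℝ))}
    (h : IsSturmianOrbit p q O) :
    ∃ e : ℕ → AddCircle (1:ℝ),
      (∀ n, e (n + q) = e n) ∧ Set.InjOn e (Set.Iio q) ∧ O = Set.range e ∧
      (∀ i j k : ℕ, i < j → j < k → k < q → sbtw (e i) (e j) (e k)) ∧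
      (∀ n, dbl (e n) = e (n + p)) ∧
      (∀ m, m < q → uval (e 0) ≤ uval (e m)) := by
  obtain ⟨e, hper, hinj, hO, hord, hdbl⟩ := h
  have hmod := per_mod hq e hper
  obtain ⟨n₀, hn₀q, hn₀min⟩ :=
    Finset.exists_min_image (range q) (fun m => uval (e m)) ⟨0, mem_range.2 hq⟩
  rw [Finset.mem_range] at hn₀q
  refine ⟨fun n => e (n + n₀), ?_, ?_, ?_, ?_, ?_, ?_⟩
  · intro n
    simp only
    have h1 : n + q + n₀ = (n + n₀) + q := by ring
    rw [h1, hper]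
  · intro i hi j hj hij
    simp only [Set.mem_Iio] at hi hj
    simp only at hij
    have h1 : e ((i + n₀) % q) = e ((j + n₀) % q) := by rw [← hmod, ← hmod]; exact hij
    have h2 : (i + n₀) % q = (j + n₀) % q :=
      hinj (Set.mem_Iio.2 (Nat.mod_lt _ (by omega))) (Set.mem_Iio.2 (Nat.mod_lt _ (by omega))) h1
    have h3 : i ≡ j [MOD q] := Nat.ModEq.add_right_cancel' n₀ h2
    exact h3.eq_of_lt_of_lt hi hj
  · rw [hO]
    ext x
    simp only [Set.mem_range]
    constructor
    · rintro ⟨n, rfl⟩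
      refine ⟨n + (q - n₀ % q), ?_⟩
      have h1 := Nat.mod_add_div n₀ q
      have h2 : n + (q - n₀ % q) + n₀ = (n + q) + q * (n₀ / q) := by
        have h3 : n₀ % q < q := Nat.mod_lt _ (by omega)
        omega
      show e (n + (q - n₀ % q) + n₀) = e n
      rw [h2, per_mul e hper, hper]
    · rintro ⟨n, rfl⟩
      exact ⟨n + n₀, rfl⟩
  · intro i j k hij hjk hkq
    simp only
    set s := n₀ % q with hs
    have hsq : s < q := Nat.mod_lt _ (by omega)
    have key : ∀ x, x < q → e (x + n₀) = e ((x + s) % q) := by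
      intro x hx
      rw [hmod (x + n₀)]
      congr 1
      exact (Nat.ModEq.add_left x (Nat.mod_modEq n₀ q)).symm
    rw [key i (by omega), key j (by omega), key k (by omega)]
    rcases Nat.lt_or_ge (k + s) q with hks | hks
    · rw [Nat.mod_eq_of_lt (by omega), Nat.mod_eq_of_lt (by omega), Nat.mod_eq_of_lt hks]
      exact hord _ _ _ (by omega) (by omega) hks
    · rcases Nat.lt_or_ge (j + s) q with hjs | hjs
      · have hk' : (k + s) % q = k + s - q := by
          rw [Nat.mod_eq_sub_mod hks, Nat.mod_eq_of_lt (by omega)]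
        rw [Nat.mod_eq_of_lt (by omega), Nat.mod_eq_of_lt hjs, hk']
        exact (hord (k + s - q) (i + s) (j + s) (by omega) (by omega) hjs).cyclic_left
      · rcases Nat.lt_or_ge (i + s) q with his | his
        · have hj' : (j + s) % q = j + s - q := by
            rw [Nat.mod_eq_sub_mod hjs, Nat.mod_eq_of_lt (by omega)]
          have hk' : (k + s) % q = k + s - q := by
            rw [Nat.mod_eq_sub_mod hks, Nat.mod_eq_of_lt (by omega)]
          rw [Nat.mod_eq_of_lt his, hj', hk']
          exact (hord (j + s - q) (k + s - q) (i + s) (by omega) (by omega) his).cyclic_right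
        · have hi' : (i + s) % q = i + s - q := by
            rw [Nat.mod_eq_sub_mod his, Nat.mod_eq_of_lt (by omega)]
          have hj' : (j + s) % q = j + s - q := by
            rw [Nat.mod_eq_sub_mod hjs, Nat.mod_eq_of_lt (by omega)]
          have hk' : (k + s) % q = k + s - q := by
            rw [Nat.mod_eq_sub_mod hks, Nat.mod_eq_of_lt (by omega)]
          rw [hi', hj', hk']
          exact hord _ _ _ (by omega) (by omega) (by omega)
  · intro n
    simp only
    have h1 : n + p + n₀ = (n + n₀) + p := by ring
    rw [h1, ← hdbl]
  · intro m hm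
    simp only [zero_add]
    rw [hmod (m + n₀)]
    exact hn₀min _ (mem_range.2 (Nat.mod_lt _ (by omega)))

lemma sturmian_unique_q1 {p : ℕ} {O : Set (AddCircle (1:ℝ))} (h : IsSturmianOrbit p 1 O) :
    O = Set.range (pt p 1) := by
  obtain ⟨e, hper, _, hO, _, hdbl⟩ := h
  have hmod := per_mod one_pos e hper
  have hconst : ∀ n, e n = e 0 := fun n => by rw [hmod n, Nat.mod_one]
  have h0 : e 0 + e 0 = e 0 := by
    have h1 := hdbl 0
    rw [dbl] at h1
    rw [h1, hconst (0 + p)]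
  have hzero : e 0 = 0 := add_eq_right.mp h0
  have hpt : ∀ n, pt p 1 n = 0 := by
    intro n
    have hA : Anum p 1 n = 0 := by
      unfold Anum dig
      rw [Finset.sum_range_one]
      simp [Nat.mod_one]
    unfold pt tval
    rw [hA]
    norm_num
  rw [hO]
  ext x
  simp only [Set.mem_range]
  constructor
  · rintro ⟨n, rfl⟩
    exact ⟨0, by rw [hpt 0, hconst n, hzero]⟩
  · rintro ⟨n, rfl⟩
    exact ⟨0, by rw [hpt n, hzero]⟩

lemma sturmian_unique {p q : ℕ} (hq2 : 2 ≤ q) (hpq : Nat.Coprime p q)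
    {O : Set (AddCircle (1:ℝ))} (h : IsSturmianOrbit p q O) : O = Set.range (pt p q) := by
  have hq : 1 ≤ q := by omega
  have hq0 : 0 < q := hq
  obtain ⟨e, hper, hinj, hO, hord, hdbl, hmin⟩ := min_witness hq h
  have hmod := per_mod hq0 e hper
  set u : ℕ → ℝ := fun n => uval (e n) with hu
  have he : ∀ n, e n = ((u n : ℝ) : AddCircle (1:ℝ)) := fun n => (coe_uval (e n)).symm
  have hu0 : ∀ n, 0 ≤ u n := fun n => (uval_mem (e n)).1
  have hu1 : ∀ n, u n < 1 := fun n => (uval_mem (e n)).2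
  have huinj : ∀ i j, i < q → j < q → u i = u j → i = j := by
    intro i j hi hj hij
    apply hinj (Set.mem_Iio.2 hi) (Set.mem_Iio.2 hj)
    rw [he i, he j, hij]
  have humono_adj : ∀ n, n + 1 < q → u n < u (n + 1) := by
    intro n hn
    rcases Nat.eq_zero_or_pos n with rfl | hn0
    · have hle := hmin 1 (by omega)
      exact lt_of_le_of_ne hle fun hcon => by
        have := huinj 0 1 (by omega) (by omega) hcon
        omega
    · have hs := hord 0 n (n + 1) hn0 (by omega) hn
      have h0n : u 0 < u n := lt_of_le_of_ne (hmin n (by omega)) fun hcon => by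
        have := huinj 0 n (by omega) (by omega) hcon
        omega
      have h0n1 : u 0 < u (n + 1) := lt_of_le_of_ne (hmin (n + 1) hn) fun hcon => by
        have := huinj 0 (n + 1) (by omega) hn hcon
        omega
      have hb : Btw.btw (e 0) (e n) (e (n + 1)) := hs.btw
      rw [he 0, he n, he (n + 1)] at hb
      have hle := le_of_btw_lifts (hu0 0) h0n (hu1 n) h0n1 (hu1 (n + 1)) hb
      exact lt_of_le_of_ne hle fun hcon => by
        have := huinj n (n + 1) (by omega) hn hcon
        omega
  have humono : ∀ i j, i < j → j < q → u i < u j := by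
    intro i j hij hj
    induction j with
    | zero => omega
    | succ j ih =>
      rcases Nat.lt_or_ge i j with hx | hx
      · exact lt_trans (ih hx (by omega)) (humono_adj j hj)
      · have : i = j := by omega
        subst this
        exact humono_adj i hj
  -- digits
  have hstep : ∀ n, n < q →
      2 * u n = (⌊2 * u n⌋ : ℝ) + u ((n + p) % q) ∧ (⌊2 * u n⌋ = 0 ∨ ⌊2 * u n⌋ = 1) := by
    intro n hn
    have hcirc : ((2 * u n : ℝ) : AddCircle (1:ℝ)) = ((u ((n + p) % q) : ℝ) : AddCircle (1:ℝ)) := by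
      have h1 : ((2 * u n : ℝ) : AddCircle (1:ℝ)) = dbl (e n) := by
        rw [dbl, he n, ← AddCircle.coe_add]
        congr 1
        ring
      rw [h1, hdbl n, hmod (n + p), he ((n + p) % q)]
    have hz : ((2 * u n - u ((n + p) % q) : ℝ) : AddCircle (1:ℝ)) = 0 := by
      rw [AddCircle.coe_sub, hcirc, sub_self]
    obtain ⟨m, hm⟩ := (AddCircle.coe_eq_zero_iff _).1 hz
    rw [zsmul_eq_mul, mul_one] at hm
    have hb1 : (-1 : ℝ) < m := by
      rw [hm]
      have := hu0 n
      have := hu1 ((n + p) % q)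
      linarith
    have hb2 : (m : ℝ) < 2 := by
      rw [hm]
      have := hu1 n
      have := hu0 ((n + p) % q)
      linarith
    have hm01 : m = 0 ∨ m = 1 := by
      have h1 : (-1 : ℤ) < m := by exact_mod_cast hb1
      have h2 : m < 2 := by exact_mod_cast hb2
      omega
    have hfl : ⌊2 * u n⌋ = m := by
      rw [Int.floor_eq_iff]
      constructor
      · have := hu0 ((n + p) % q); linarith
      · have := hu1 ((n + p) % q); push_cast; linarith
    rw [hfl]
    exact ⟨by rw [hm]; ring, hm01⟩
  have hchar : ∀ n, n < q → (⌊2 * u n⌋ = 1 ↔ 1 ≤ 2 * u n) := by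
    intro n hn
    constructor
    · intro h1
      have := Int.le_floor.mp (le_of_eq h1.symm)
      exact_mod_cast this
    · intro h1
      have h2 : (1:ℤ) ≤ ⌊2 * u n⌋ := Int.le_floor.mpr (by exact_mod_cast h1)
      rcases (hstep n hn).2 with h | h <;> omega
  set r := p % q with hr
  have hrq : r < q := Nat.mod_lt _ (by omega)
  have hr0 : 0 < r := by
    rcases Nat.eq_zero_or_pos r with hx | hx
    · exfalso
      have hd : q ∣ p := Nat.dvd_of_mod_eq_zero hx
      have h1 : q ∣ 1 := hpq ▸ Nat.dvd_gcd hd dvd_rfl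
      have := Nat.le_of_dvd one_pos h1
      omega
    · exact hx
  have hjstar1 : (q - 1 - r + p) % q = q - 1 := by
    rw [Nat.add_mod, Nat.mod_eq_of_lt (show q - 1 - r < q by omega), ← hr]
    have h1 : q - 1 - r + r = q - 1 := by omega
    rw [h1, Nat.mod_eq_of_lt (by omega)]
  have hjstar2 : (q - r + p) % q = 0 := by
    rw [Nat.add_mod, Nat.mod_eq_of_lt (show q - r < q by omega), ← hr]
    have h1 : q - r + r = q := by omega
    rw [h1, Nat.mod_self]
  have hA := (hstep (q - 1 - r) (by omega)).1
  have hB := (hstep (q - r) (by omega)).1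
  rw [hjstar1] at hA
  rw [hjstar2] at hB
  have hu01 : u 0 < u (q - 1) := humono 0 (q - 1) (by omega) (by omega)
  have huAB : u (q - 1 - r) < u (q - r) := humono _ _ (by omega) (by omega)
  have hdlt : ⌊2 * u (q - 1 - r)⌋ < ⌊2 * u (q - r)⌋ := by
    have hreal : (⌊2 * u (q - 1 - r)⌋ : ℝ) < (⌊2 * u (q - r)⌋ : ℝ) := by linarith
    exact_mod_cast hreal
  have hdA : ⌊2 * u (q - 1 - r)⌋ = 0 := by
    rcases (hstep (q - 1 - r) (by omega)).2 with h1 | h1 <;>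
      rcases (hstep (q - r) (by omega)).2 with h2 | h2 <;> omega
  have hdB : ⌊2 * u (q - r)⌋ = 1 := by
    rcases (hstep (q - 1 - r) (by omega)).2 with h1 | h1 <;>
      rcases (hstep (q - r) (by omega)).2 with h2 | h2 <;> omega
  have hd_dig : ∀ n, n < q → ⌊2 * u n⌋ = (dig p q n : ℤ) := by
    intro n hn
    unfold dig
    rw [Nat.mod_eq_of_lt hn, ← hr]
    split_ifs with hcond
    · -- q - r ≤ n : digit 1
      have hge : 1 ≤ 2 * u n := by
        have h1 : u (q - r) ≤ u n := by
          rcases Nat.lt_or_ge (q - r) n with hx | hx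
          · exact le_of_lt (humono _ _ hx hn)
          · have : n = q - r := by omega
            rw [this]
        have h2 : 1 ≤ 2 * u (q - r) := (hchar (q - r) (by omega)).mp hdB
        linarith
      exact_mod_cast (hchar n hn).mpr hge
    · -- n < q - r : digit 0
      have hlt : ¬ (1 ≤ 2 * u n) := by
        have h1 : u n ≤ u (q - 1 - r) := by
          rcases Nat.lt_or_ge n (q - 1 - r) with hx | hx
          · exact le_of_lt (humono _ _ hx (by omega))
          · have : n = q - 1 - r := by omega
            rw [this]
        have h2 : 2 * u (q - 1 - r) < 1 := by
          rw [hA, hdA]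
          push_cast
          have := hu1 (q - 1)
          linarith
        intro hcon
        linarith
      have := (hchar n hn)
      rcases (hstep n hn).2 with h1 | h1
      · exact_mod_cast h1
      · exact absurd ((hchar n hn).mp h1) hlt
  -- solve the recursion
  have hrec : ∀ k, k ≤ q → ∀ n, n < q → (2:ℝ) ^ k * u n =
      (∑ i ∈ range k, (dig p q (n + i * p) : ℝ) * 2 ^ (k - 1 - i)) + u ((n + k * p) % q) := by
    intro k
    induction k with
    | zero =>
      intro _ n hn
      simp [Nat.mod_eq_of_lt hn]
    | succ k ih =>
      intro hk n hn
      have IH := ih (by omega) n hn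
      have hmq : (n + k * p) % q < q := Nat.mod_lt _ (by omega)
      have hstepk := (hstep ((n + k * p) % q) hmq).1
      have hmod2 : ((n + k * p) % q + p) % q = (n + (k + 1) * p) % q := by
        rw [Nat.mod_add_mod]
        congr 1
        ring
      have hdigk : ⌊2 * u ((n + k * p) % q)⌋ = (dig p q (n + k * p) : ℤ) := by
        rw [hd_dig _ hmq]
        exact_mod_cast congrArg (Nat.cast (R := ℤ))
          (dig_eq_of_mod_eq (Nat.mod_mod_of_dvd _ dvd_rfl))
      rw [hmod2, hdigk] at hstepk
      have hsum : ∑ i ∈ range (k + 1), (dig p q (n + i * p) : ℝ) * 2 ^ (k + 1 - 1 - i) =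
          2 * (∑ i ∈ range k, (dig p q (n + i * p) : ℝ) * 2 ^ (k - 1 - i)) +
            (dig p q (n + k * p) : ℝ) := by
        rw [Finset.sum_range_succ, Finset.mul_sum]
        have hlast : (k + 1 - 1 - k) = 0 := by omega
        rw [hlast, pow_zero, mul_one]
        congr 1
        refine Finset.sum_congr rfl fun i hi => ?_
        have hik : i < k := Finset.mem_range.1 hi
        have hexp : k + 1 - 1 - i = (k - 1 - i) + 1 := by omega
        rw [hexp, pow_succ]
        ring
      have hcast : ((dig p q (n + k * p) : ℤ) : ℝ) = (dig p q (n + k * p) : ℝ) := by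
        push_cast
        rfl
      calc (2:ℝ) ^ (k + 1) * u n = 2 * ((2:ℝ) ^ k * u n) := by ring
        _ = 2 * (∑ i ∈ range k, (dig p q (n + i * p) : ℝ) * 2 ^ (k - 1 - i)) +
            2 * u ((n + k * p) % q) := by rw [IH]; ring
        _ = 2 * (∑ i ∈ range k, (dig p q (n + i * p) : ℝ) * 2 ^ (k - 1 - i)) +
            ((dig p q (n + k * p) : ℝ) + u ((n + (k + 1) * p) % q)) := by
              rw [hstepk, hcast]
        _ = (∑ i ∈ range (k + 1), (dig p q (n + i * p) : ℝ) * 2 ^ (k + 1 - 1 - i)) +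
            u ((n + (k + 1) * p) % q) := by rw [hsum]; ring
  have hsolve : ∀ n, n < q → u n = tval p q n := by
    intro n hn
    have hk := hrec q (le_refl q) n hn
    have hnq : (n + q * p) % q = n := by
      rw [Nat.add_mul_mod_self_left, Nat.mod_eq_of_lt hn]
    rw [hnq] at hk
    have hAcast : (∑ i ∈ range q, (dig p q (n + i * p) : ℝ) * 2 ^ (q - 1 - i)) =
        (Anum p q n : ℝ) := by
      unfold Anum
      push_cast
      rfl
    rw [hAcast] at hk
    have hDq := hD (q := q) hq0
    unfold tval
    field_simp
    linarith
  have hept : ∀ n, n < q → e n = pt p q n := by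
    intro n hn
    rw [he n, hsolve n hn]
    rfl
  rw [hO]
  ext x
  simp only [Set.mem_range]
  constructor
  · rintro ⟨n, rfl⟩
    refine ⟨n % q, ?_⟩
    rw [← hept (n % q) (Nat.mod_lt _ (by omega)), ← hmod n]
  · rintro ⟨n, rfl⟩
    refine ⟨n % q, ?_⟩
    rw [hept (n % q) (Nat.mod_lt _ (by omega)), ← pt_mod]

lemma sturmian_ncard {p q : ℕ} (hq : 1 ≤ q) {O : Set (AddCircle (1:ℝ))}
    (h : IsSturmianOrbit p q O) : O.ncard = q := by
  obtain ⟨e, hper, hinj, hO, -, -⟩ := h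
  have hmod := per_mod hq e hper
  have himg : O = e '' (Set.Iio q) := by
    rw [hO]
    ext x
    constructor
    · rintro ⟨n, rfl⟩
      exact ⟨n % q, Set.mem_Iio.2 (Nat.mod_lt _ (by omega)), (hmod n).symm⟩
    · rintro ⟨n, hn, rfl⟩
      exact ⟨n, rfl⟩
  rw [himg, Set.ncard_image_of_injOn hinj, ← Finset.coe_range, Set.ncard_coe_finset,
    Finset.card_range]

theorem sturmian_orbit_exists_unique (p q : ℕ) (hq : 1 ≤ q) (hpq : Nat.Coprime p q) :
    (∃! O : Set (AddCircle (1:ℝ)), IsSturmianOrbit p q O) ∧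
    (∀ O : Set (AddCircle (1:ℝ)), IsSturmianOrbit p q O → O.ncard = q) := by
  constructor
  · refine ⟨Set.range (pt p q), sturmian_exists hq hpq, ?_⟩
    intro O hO
    rcases Nat.lt_or_ge q 2 with h2 | h2
    · have hq1 : q = 1 := by omega
      subst hq1
      exact sturmian_unique_q1 hO
    · exact sturmian_unique h2 hpq hO
  · intro O hO
    exact sturmian_ncard hq hO
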